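/- arXiv:2506.20072 — 2 statements merged into one kernel-verified Lean document; each statement's English description precedes it below -/
import Mathlib

section
/- Let G be a finite simple graph in which every vertex has degree at least δ, where δ ≥ 1, let J be a δ-regular spanning subgraph of G with h edges, and let uv be an edge of J. Writing Δ(w) = deg_G(w) − δ, the probability that J ⊆ G_ω and e_{k(ω)} = uv equals (1/h) · [ 1/binom(h+Δ(u), h) + 1/binom(h+Δ(v), h) − 1/binom(h+Δ(u)+Δ(v), h) ]. -/
open Finset

/-- The degree of a vertex `v` in the graph whose edge set is the finite set `s`
of edges (elements of `Sym2 V`). -/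
def degIn {V : Type*} [DecidableEq V] (s : Finset (Sym2 V)) (v : V) : ℕ :=
  (s.filter (fun e => v ∈ e)).card

/-- Given an ordering `ω` of a finite set `s` of edges, the set consisting of the
first `i` edges `e_{ω(1)}, …, e_{ω(i)}`. -/
def prefixEdges {V : Type*} [DecidableEq V] {s : Finset (Sym2 V)}
    (ω : Fin s.card ≃ {e : Sym2 V // e ∈ s}) (i : ℕ) : Finset (Sym2 V) :=
  (Finset.univ.filter (fun j : Fin s.card => (j : ℕ) < i)).image (fun j => (ω j : Sym2 V))

/-- `k(ω)`: the least `i` such that every vertex has degree at least `δ` in the graph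
formed by the first `i` edges of the ordering `ω`. -/
noncomputable def stopIndex {V : Type*} [Fintype V] [DecidableEq V] (δ : ℕ)
    {s : Finset (Sym2 V)} (ω : Fin s.card ≃ {e : Sym2 V // e ∈ s}) : ℕ :=
  sInf {i | ∀ v : V, δ ≤ degIn (prefixEdges ω i) v}

/-- The edge set of `G_ω`, i.e. the first `k(ω)` edges of the ordering `ω`. -/
noncomputable def finalEdges {V : Type*} [Fintype V] [DecidableEq V] (δ : ℕ)
    {s : Finset (Sym2 V)} (ω : Fin s.card ≃ {e : Sym2 V // e ∈ s}) : Finset (Sym2 V) :=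
  prefixEdges ω (stopIndex δ ω)

/-- A graph is `δ`-regular: every vertex has exactly `δ` neighbours. -/
def regOfDegree {V : Type*} (J : SimpleGraph V) (δ : ℕ) : Prop :=
  ∀ v : V, (J.neighborSet v).ncard = δ

/-- `e` is the last edge `e_{k(ω)}` of `G_ω`: it belongs to the first `k(ω)` edges but
not to the first `k(ω) − 1` edges. -/
noncomputable def lastEdgeIs {V : Type*} [Fintype V] [DecidableEq V] (δ : ℕ)
    {s : Finset (Sym2 V)} (ω : Fin s.card ≃ {e : Sym2 V // e ∈ s}) (e : Sym2 V) : Prop :=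
  e ∈ prefixEdges ω (stopIndex δ ω) ∧ e ∉ prefixEdges ω (stopIndex δ ω - 1)



open Finset

/-- Bijections compatible with colorings correspond to families of fiberwise bijections. -/
def fiberEquiv {α β γ : Type*} (f : β → γ) (c : α → γ) :
    {ω : α ≃ β // ∀ j, f (ω j) = c j} ≃ Π k, ({j // c j = k} ≃ {x // f x = k}) where
  toFun ω k :=
    { toFun := fun j => ⟨ω.1 j.1, by rw [ω.2]; exact j.2⟩
      invFun := fun x => ⟨ω.1.symm x.1, by
        rw [← ω.2 (ω.1.symm x.1), Equiv.apply_symm_apply]; exact x.2⟩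
      left_inv := fun j => by ext; simp
      right_inv := fun x => by ext; simp }
  invFun F :=
    ⟨(Equiv.sigmaFiberEquiv c).symm.trans ((Equiv.sigmaCongrRight F).trans
      (Equiv.sigmaFiberEquiv f)), by
      intro j
      exact (F (c j) ⟨j, rfl⟩).2⟩
  left_inv ω := by
    ext j
    rfl
  right_inv F := by
    funext k
    ext j
    obtain ⟨j, hj⟩ := j
    subst hj
    rfl

section rank

variable {m : ℕ}

/-- The number of elements of `T` strictly below `j`. -/
def rnk (T : Finset (Fin m)) (j : Fin m) : ℕ := (T.filter (fun i => i < j)).card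

lemma rnk_lt_of_lt {T : Finset (Fin m)} {i j : Fin m} (hi : i ∈ T) (hij : i < j) :
    rnk T i < rnk T j := by
  have hsub : insert i (T.filter (fun x => x < i)) ⊆ T.filter (fun x => x < j) := by
    intro x hx
    rcases Finset.mem_insert.mp hx with rfl | hx
    · exact Finset.mem_filter.mpr ⟨hi, hij⟩
    · rcases Finset.mem_filter.mp hx with ⟨h1, h2⟩
      exact Finset.mem_filter.mpr ⟨h1, h2.trans hij⟩
  have := Finset.card_le_card hsub
  rw [Finset.card_insert_of_notMem (by simp)] at this
  unfold rnk
  omega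

lemma rnk_injOn {T : Finset (Fin m)} {i j : Fin m} (hi : i ∈ T) (hj : j ∈ T)
    (hij : rnk T i = rnk T j) : i = j := by
  rcases lt_trichotomy i j with hlt | he | hlt
  · exact absurd hij (Nat.ne_of_lt (rnk_lt_of_lt hi hlt))
  · exact he
  · exact absurd hij.symm (Nat.ne_of_lt (rnk_lt_of_lt hj hlt))

lemma rnk_lt_card {T : Finset (Fin m)} {j : Fin m} (hj : j ∈ T) : rnk T j < T.card := by
  have hsub : T.filter (fun i => i < j) ⊆ T.erase j := by
    intro x hx
    rcases Finset.mem_filter.mp hx with ⟨h1, h2⟩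
    exact Finset.mem_erase.mpr ⟨ne_of_lt h2, h1⟩
  have h1 := Finset.card_le_card hsub
  have h2 := Finset.card_erase_of_mem hj
  have h3 : 0 < T.card := Finset.card_pos.mpr ⟨j, hj⟩
  unfold rnk
  omega

lemma rnk_image (T : Finset (Fin m)) : T.image (rnk T) = Finset.range T.card := by
  apply Finset.eq_of_subset_of_card_le
  · intro x hx
    rcases Finset.mem_image.mp hx with ⟨j, hj, rfl⟩
    exact Finset.mem_range.mpr (rnk_lt_card hj)
  · rw [Finset.card_range, Finset.card_image_of_injOn (fun i hi j hj => rnk_injOn hi hj)]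

lemma rnk_filter_card (T : Finset (Fin m)) (p : ℕ → Prop) [DecidablePred p] :
    (T.filter (fun j => p (rnk T j))).card = ((Finset.range T.card).filter p).card := by
  rw [← rnk_image T, Finset.filter_image, Finset.card_image_of_injOn]
  intro i hi j hj
  exact rnk_injOn (Finset.mem_filter.mp hi).1 (Finset.mem_filter.mp hj).1

end rank

set_option linter.unusedSectionVars false

section blocks

variable {E : Type*} [Fintype E] [DecidableEq E]

/-- The block (colour) of an element: `0` in `A`, `1` if it is `e₀`, `2` in `B`, `3` otherwise. -/
def blk (A B : Finset E) (e₀ : E) (x : E) : Fin 4 :=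
  if x ∈ A then 0 else if x = e₀ then 1 else if x ∈ B then 2 else 3

/-- The pattern determined by a set `T` of positions. -/
def cpat {m : ℕ} (a : ℕ) (T : Finset (Fin m)) (j : Fin m) : Fin 4 :=
  if j ∈ T then (if rnk T j < a then 0 else if rnk T j = a then 1 else 2) else 3

variable {A B : Finset E} {e₀ : E}

lemma blk_A {x : E} (hx : x ∈ A) : blk A B e₀ x = 0 := by simp [blk, hx]

lemma blk_e₀ (hA : e₀ ∉ A) : blk A B e₀ e₀ = 1 := by simp [blk, hA]

lemma blk_B (hAB : Disjoint A B) (hB : e₀ ∉ B) {x : E} (hx : x ∈ B) :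
    blk A B e₀ x = 2 := by
  have h1 : x ∉ A := fun hxa => (Finset.disjoint_left.mp hAB hxa) hx
  have h2 : x ≠ e₀ := fun hh => hB (hh ▸ hx)
  simp [blk, h1, h2, hx]

lemma blk_eq_zero {x : E} (hx : blk A B e₀ x = 0) : x ∈ A := by
  unfold blk at hx
  split_ifs at hx with h1 h2 h3
  · exact h1
  all_goals exact absurd hx (by decide)

lemma blk_eq_one {x : E} (hx : blk A B e₀ x = 1) : x = e₀ := by
  unfold blk at hx
  split_ifs at hx with h1 h2 h3
  · exact absurd hx (by decide)
  · exact h2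
  all_goals exact absurd hx (by decide)

lemma blk_eq_two {x : E} (hx : blk A B e₀ x = 2) : x ∈ B := by
  unfold blk at hx
  split_ifs at hx with h1 h2 h3
  · exact absurd hx (by decide)
  · exact absurd hx (by decide)
  · exact h3
  · exact absurd hx (by decide)

lemma blk_ne_three {x : E} (hx : blk A B e₀ x ≠ 3) : x ∈ A ∪ {e₀} ∪ B := by
  unfold blk at hx
  split_ifs at hx with h1 h2 h3
  · simp [h1]
  · simp [h2]
  · simp [h3]
  · exact absurd rfl hx

lemma blk_mem_ne_three {x : E} (hx : x ∈ A ∪ {e₀} ∪ B) : blk A B e₀ x ≠ 3 := by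
  simp only [Finset.mem_union, Finset.mem_singleton] at hx
  unfold blk
  split_ifs with h1 h2 h3
  · decide
  · decide
  · decide
  · tauto

lemma cpat_mem_ne_three {m : ℕ} {a : ℕ} {T : Finset (Fin m)} {j : Fin m} :
    cpat a T j ≠ 3 ↔ j ∈ T := by
  constructor
  · intro hc
    by_contra hj
    simp [cpat, hj] at hc
  · intro hj
    unfold cpat
    split_ifs <;> first | decide | exact absurd hj (by assumption)

end blocks

section cpatlem

variable {m a : ℕ} {T : Finset (Fin m)} {j : Fin m}

lemma cpat_eq_zero (h : cpat a T j = 0) : j ∈ T ∧ rnk T j < a := by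
  unfold cpat at h
  split_ifs at h with h1 h2 h3
  · exact ⟨h1, h2⟩
  all_goals exact absurd h (by decide)

lemma cpat_eq_one (h : cpat a T j = 1) : j ∈ T ∧ rnk T j = a := by
  unfold cpat at h
  split_ifs at h with h1 h2 h3
  · exact absurd h (by decide)
  · exact ⟨h1, h3⟩
  all_goals exact absurd h (by decide)

lemma cpat_eq_two (h : cpat a T j = 2) : j ∈ T ∧ a < rnk T j := by
  unfold cpat at h
  split_ifs at h with h1 h2 h3
  · exact absurd h (by decide)
  · exact absurd h (by decide)
  · exact ⟨h1, by omega⟩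
  · exact absurd h (by decide)

lemma cpat_of_lt (h1 : j ∈ T) (h2 : rnk T j < a) : cpat a T j = 0 := by
  simp [cpat, h1, h2]

lemma cpat_of_eq (h1 : j ∈ T) (h2 : rnk T j = a) : cpat a T j = 1 := by
  simp [cpat, h1, h2]

lemma cpat_of_gt (h1 : j ∈ T) (h2 : a < rnk T j) : cpat a T j = 2 := by
  have h3 : ¬ rnk T j < a := by omega
  have h4 : ¬ rnk T j = a := by omega
  simp [cpat, h1, h3, h4]

lemma cpat_not_mem (h1 : j ∉ T) : cpat a T j = 3 := by simp [cpat, h1]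

end cpatlem

section main

variable {E : Type*} [Fintype E] [DecidableEq E]

lemma card_filter_comp_equiv {m : ℕ} (ω : Fin m ≃ E) (q : E → Prop) [DecidablePred q] :
    (Finset.univ.filter fun j => q (ω j)).card = (Finset.univ.filter q).card := by
  apply Finset.card_bij' (fun j _ => ω j) (fun x _ => ω.symm x) <;> simp

lemma count_main {m : ℕ} (hm : Fintype.card E = m)
    (A B : Finset E) (e₀ : E) (hA : e₀ ∉ A) (hB : e₀ ∉ B) (hAB : Disjoint A B) :
    Nat.card {ω : Fin m ≃ E // (∀ x ∈ A, (ω.symm x : ℕ) < (ω.symm e₀ : ℕ)) ∧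
        (∀ y ∈ B, (ω.symm e₀ : ℕ) < (ω.symm y : ℕ))} =
      m.choose (A.card + B.card + 1) * Nat.factorial A.card * Nat.factorial B.card *
        Nat.factorial (m - (A.card + B.card + 1)) := by
  classical
  set a := A.card with ha
  set b := B.card with hb
  set s := a + b + 1 with hs
  set f : E → Fin 4 := blk A B e₀ with hf
  set S : Finset E := A ∪ {e₀} ∪ B with hS
  have hScard : S.card = s := by
    rw [hS, Finset.card_union_of_disjoint, Finset.card_union_of_disjoint]
    · simp [hs]; ring
    · simpa using hA
    · rw [Finset.disjoint_union_left]
      exact ⟨hAB, by simpa using hB⟩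
  have hsm : s ≤ m := by
    rw [← hScard, ← hm, ← Finset.card_univ]
    exact Finset.card_le_card (Finset.subset_univ S)
  have hfS : ∀ x : E, f x ≠ 3 ↔ x ∈ S := fun x => ⟨blk_ne_three, blk_mem_ne_three⟩
  set P : (Fin m ≃ E) → Prop := fun ω => (∀ x ∈ A, (ω.symm x : ℕ) < (ω.symm e₀ : ℕ)) ∧
      (∀ y ∈ B, (ω.symm e₀ : ℕ) < (ω.symm y : ℕ)) with hP
  set Tmap : (Fin m ≃ E) → Finset (Fin m) :=
      fun ω => Finset.univ.filter (fun j => f (ω j) ≠ 3) with hTmap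
  have hTcard : ∀ ω : Fin m ≃ E, (Tmap ω).card = s := by
    intro ω
    rw [hTmap, card_filter_comp_equiv ω (fun x => f x ≠ 3)]
    rw [← hScard]
    congr 1
    ext x
    simp [hfS x]
  -- key equivalence
  have key : ∀ (T : Finset (Fin m)), T.card = s → ∀ ω : Fin m ≃ E,
      (P ω ∧ Tmap ω = T) ↔ (∀ j, f (ω j) = cpat a T j) := by
    intro T hT ω
    constructor
    · rintro ⟨hPω, rfl⟩
      have memT : ∀ x : E, ω.symm x ∈ Tmap ω ↔ x ∈ S := by
        intro x
        simp only [hTmap, Finset.mem_filter, Finset.mem_univ, true_and,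
          Equiv.apply_symm_apply]
        exact hfS x
      have hAfilter : (Tmap ω).filter (fun i => i < ω.symm e₀) = A.image ω.symm := by
        ext i
        simp only [Finset.mem_filter, Finset.mem_image]
        constructor
        · rintro ⟨hiT, hilt⟩
          have hS' : ω i ∈ S := by
            apply (hfS _).mp
            simpa [hTmap] using hiT
          rw [hS] at hS'
          simp only [Finset.mem_union, Finset.mem_singleton] at hS'
          rcases hS' with (hx | hx) | hx
          · exact ⟨ω i, hx, by simp⟩
          · exfalso
            have : i = ω.symm e₀ := by rw [← hx]; simp
            exact absurd (this ▸ hilt) (lt_irrefl _)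
          · exfalso
            have := hPω.2 (ω i) hx
            simp only [Equiv.symm_apply_apply] at this
            have h2 : (i : ℕ) < (ω.symm e₀ : ℕ) := hilt
            omega
        · rintro ⟨x, hx, rfl⟩
          exact ⟨(memT x).mpr (by simp [hS, hx]), hPω.1 x hx⟩
      have hAcard : (A.image ω.symm).card = a := Finset.card_image_of_injective _ ω.symm.injective
      have hranke : rnk (Tmap ω) (ω.symm e₀) = a := by
        rw [rnk, hAfilter, hAcard]
      intro j
      have hS' : ω j ∈ S ∨ f (ω j) = 3 := by
        by_cases hh : f (ω j) = 3
        · exact Or.inr hh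
        · exact Or.inl ((hfS _).mp hh)
      rcases hS' with hS' | hS'
      · have hjT : j ∈ Tmap ω := by
          simp only [hTmap, Finset.mem_filter, Finset.mem_univ, true_and]
          exact (hfS _).mpr hS'
        rw [hS] at hS'
        simp only [Finset.mem_union, Finset.mem_singleton] at hS'
        rcases hS' with (hx | hx) | hx
        · -- ω j ∈ A
          rw [hf, blk_A hx]
          apply (cpat_of_lt hjT _).symm
          have hsub : (Tmap ω).filter (fun i => i < j) ⊆ (A.image ω.symm).erase j := by
            intro i hi
            rcases Finset.mem_filter.mp hi with ⟨hiT, hij⟩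
            have hje : (j : ℕ) < (ω.symm e₀ : ℕ) := by
              have := hPω.1 (ω j) hx
              simpa using this
            have : i ∈ (Tmap ω).filter (fun i => i < ω.symm e₀) := by
              refine Finset.mem_filter.mpr ⟨hiT, ?_⟩
              have h2 : (i : ℕ) < (j : ℕ) := hij
              exact Fin.lt_def.mpr (by omega)
            rw [hAfilter] at this
            exact Finset.mem_erase.mpr ⟨ne_of_lt hij, this⟩
          have hcard := Finset.card_le_card hsub
          rw [Finset.card_erase_of_mem (Finset.mem_image.mpr ⟨ω j, hx, by simp⟩), hAcard]
            at hcard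
          have hapos : 0 < a := by
            rw [ha]
            exact Finset.card_pos.mpr ⟨ω j, hx⟩
          rw [rnk]
          omega
        · -- ω j = e₀
          rw [hf, hx, blk_e₀ hA]
          have hj : j = ω.symm e₀ := by rw [← hx]; simp
          exact (cpat_of_eq hjT (hj ▸ hranke)).symm
        · -- ω j ∈ B
          rw [hf, blk_B hAB hB hx]
          apply (cpat_of_gt hjT _).symm
          have hsub : insert (ω.symm e₀) (A.image ω.symm) ⊆
              (Tmap ω).filter (fun i => i < j) := by
            intro i hi
            have hje : (ω.symm e₀ : ℕ) < (j : ℕ) := by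
              have := hPω.2 (ω j) hx
              simpa using this
            rcases Finset.mem_insert.mp hi with rfl | hi
            · exact Finset.mem_filter.mpr ⟨(memT e₀).mpr (by simp [hS]),
                Fin.lt_def.mpr hje⟩
            · rcases Finset.mem_image.mp hi with ⟨x, hx', rfl⟩
              refine Finset.mem_filter.mpr ⟨(memT x).mpr (by simp [hS, hx']), ?_⟩
              have h2 := hPω.1 x hx'
              exact Fin.lt_def.mpr (by omega)
          have hcard := Finset.card_le_card hsub
          have hnotmem : ω.symm e₀ ∉ A.image ω.symm := by
            intro hmem
            rcases Finset.mem_image.mp hmem with ⟨x, hx', hxe⟩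
            exact hA (by rwa [ω.symm.injective hxe] at hx')
          rw [Finset.card_insert_of_notMem hnotmem, hAcard] at hcard
          rw [rnk]
          omega
      · -- f (ω j) = 3
        rw [hS']
        have hjT : j ∉ Tmap ω := by
          simp only [hTmap, Finset.mem_filter, Finset.mem_univ, true_and, not_not]
          exact hS'
        exact (cpat_not_mem hjT).symm
    · intro hc
      have hTeq : Tmap ω = T := by
        ext j
        simp only [hTmap, Finset.mem_filter, Finset.mem_univ, true_and]
        rw [hc j]
        exact cpat_mem_ne_three
      have hje : cpat a T (ω.symm e₀) = 1 := by
        rw [← hc]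
        simp only [Equiv.apply_symm_apply]
        exact blk_e₀ hA
      rcases cpat_eq_one hje with ⟨hjeT, hjeR⟩
      constructor
      constructor
      · intro x hx
        have hjx : cpat a T (ω.symm x) = 0 := by
          rw [← hc]
          simp only [Equiv.apply_symm_apply]
          exact blk_A hx
        rcases cpat_eq_zero hjx with ⟨hjxT, hjxR⟩
        by_contra hcon
        push_neg at hcon
        have hne : ω.symm x ≠ ω.symm e₀ := by
          intro hh
          exact hA (by rwa [ω.symm.injective hh] at hx)
        have hlt : ω.symm e₀ < ω.symm x := by
          rcases lt_or_eq_of_le (Fin.le_def.mpr hcon) with hlt | heq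
          · exact hlt
          · exact absurd (Fin.ext (by omega : ((ω.symm e₀ : ℕ)) = (ω.symm x : ℕ))).symm hne
        have := rnk_lt_of_lt hjeT hlt
        omega
      · intro y hy
        have hjy : cpat a T (ω.symm y) = 2 := by
          rw [← hc]
          simp only [Equiv.apply_symm_apply]
          exact blk_B hAB hB hy
        rcases cpat_eq_two hjy with ⟨hjyT, hjyR⟩
        by_contra hcon
        push_neg at hcon
        have hne : ω.symm y ≠ ω.symm e₀ := by
          intro hh
          exact hB (by rwa [ω.symm.injective hh] at hy)
        have hlt : ω.symm y < ω.symm e₀ := by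
          rcases lt_or_eq_of_le (Fin.le_def.mpr hcon) with hlt | heq
          · exact hlt
          · exact absurd (Fin.ext (by omega : ((ω.symm y : ℕ)) = (ω.symm e₀ : ℕ))) hne
        have := rnk_lt_of_lt hjyT hlt
        omega
      · exact hTeq
  -- fibre cardinality
  have fib : ∀ T : Finset (Fin m), T.card = s →
      (Finset.univ.filter fun ω : Fin m ≃ E => ∀ j, f (ω j) = cpat a T j).card
        = Nat.factorial a * Nat.factorial b * Nat.factorial (m - s) := by
    intro T hT
    have hcard : (Finset.univ.filter fun ω : Fin m ≃ E => ∀ j, f (ω j) = cpat a T j).card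
        = Fintype.card {ω : Fin m ≃ E // ∀ j, f (ω j) = cpat a T j} :=
      (Fintype.card_subtype _).symm
    rw [hcard, Fintype.card_congr (fiberEquiv f (cpat a T)), Fintype.card_pi]
    have hb0 : Fintype.card {x // f x = 0} = a := by
      rw [Fintype.card_subtype]
      rw [show Finset.univ.filter (fun x => f x = 0) = A from
        Finset.ext fun x => by
          simp only [Finset.mem_filter, Finset.mem_univ, true_and]
          exact ⟨fun hh => blk_eq_zero hh, fun hh => blk_A hh⟩]
    have hb1 : Fintype.card {x // f x = 1} = 1 := by
      rw [Fintype.card_subtype]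
      rw [show Finset.univ.filter (fun x => f x = 1) = {e₀} from
        Finset.ext fun x => by
          simp only [Finset.mem_filter, Finset.mem_univ, true_and, Finset.mem_singleton]
          exact ⟨fun hh => blk_eq_one hh, fun hh => hh ▸ blk_e₀ hA⟩]
      exact Finset.card_singleton e₀
    have hb2 : Fintype.card {x // f x = 2} = b := by
      rw [Fintype.card_subtype]
      rw [show Finset.univ.filter (fun x => f x = 2) = B from
        Finset.ext fun x => by
          simp only [Finset.mem_filter, Finset.mem_univ, true_and]
          exact ⟨fun hh => blk_eq_two hh, fun hh => blk_B hAB hB hh⟩]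
    have hb3 : Fintype.card {x // f x = 3} = m - s := by
      rw [Fintype.card_subtype]
      rw [show Finset.univ.filter (fun x => f x = 3) = Finset.univ \ S from
        Finset.ext fun x => by
          simp only [Finset.mem_filter, Finset.mem_univ, true_and, Finset.mem_sdiff]
          constructor
          · intro hh
            intro hxS
            exact blk_mem_ne_three (hS ▸ hxS) hh
          · intro hh
            by_contra hne
            exact hh (hS ▸ blk_ne_three hne)]
      rw [Finset.card_sdiff_of_subset (Finset.subset_univ S), Finset.card_univ, hm, hScard]
    have hc0 : Fintype.card {j // cpat a T j = 0} = a := by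
      rw [Fintype.card_subtype]
      rw [show Finset.univ.filter (fun j => cpat a T j = 0)
          = T.filter (fun j => rnk T j < a) from
        Finset.ext fun j => by
          simp only [Finset.mem_filter, Finset.mem_univ, true_and]
          exact ⟨fun hh => cpat_eq_zero hh, fun hh => cpat_of_lt hh.1 hh.2⟩]
      rw [rnk_filter_card T (fun v => v < a), hT]
      rw [show (Finset.range s).filter (fun v => v < a) = Finset.range a from
        Finset.ext fun v => by
          simp only [Finset.mem_filter, Finset.mem_range]
          omega]
      exact Finset.card_range a
    have hc1 : Fintype.card {j // cpat a T j = 1} = 1 := by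
      rw [Fintype.card_subtype]
      rw [show Finset.univ.filter (fun j => cpat a T j = 1)
          = T.filter (fun j => rnk T j = a) from
        Finset.ext fun j => by
          simp only [Finset.mem_filter, Finset.mem_univ, true_and]
          exact ⟨fun hh => cpat_eq_one hh, fun hh => cpat_of_eq hh.1 hh.2⟩]
      rw [rnk_filter_card T (fun v => v = a), hT]
      rw [show (Finset.range s).filter (fun v => v = a) = {a} from
        Finset.ext fun v => by
          simp only [Finset.mem_filter, Finset.mem_range, Finset.mem_singleton]
          omega]
      exact Finset.card_singleton a
    have hc2 : Fintype.card {j // cpat a T j = 2} = b := by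
      rw [Fintype.card_subtype]
      rw [show Finset.univ.filter (fun j => cpat a T j = 2)
          = T.filter (fun j => a < rnk T j) from
        Finset.ext fun j => by
          simp only [Finset.mem_filter, Finset.mem_univ, true_and]
          exact ⟨fun hh => cpat_eq_two hh, fun hh => cpat_of_gt hh.1 hh.2⟩]
      rw [rnk_filter_card T (fun v => a < v), hT]
      rw [show (Finset.range s).filter (fun v => a < v) = Finset.Ico (a + 1) s from
        Finset.ext fun v => by
          simp only [Finset.mem_filter, Finset.mem_range, Finset.mem_Ico]
          omega]
      rw [Nat.card_Ico]
      omega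
    have hc3 : Fintype.card {j // cpat a T j = 3} = m - s := by
      rw [Fintype.card_subtype]
      rw [show Finset.univ.filter (fun j => cpat a T j = 3) = Finset.univ \ T from
        Finset.ext fun j => by
          simp only [Finset.mem_filter, Finset.mem_univ, true_and, Finset.mem_sdiff]
          constructor
          · intro hh
            intro hjT
            exact cpat_mem_ne_three.mpr hjT hh
          · intro hh
            by_contra hne
            exact hh (cpat_mem_ne_three.mp hne)]
      rw [Finset.card_sdiff_of_subset (Finset.subset_univ T), Finset.card_univ, Fintype.card_fin, hT]
    have heqk : ∀ k : Fin 4,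
        Fintype.card ({j // cpat a T j = k} ≃ {x // f x = k})
          = Nat.factorial (Fintype.card {j // cpat a T j = k}) := by
      intro k
      refine Fintype.card_equiv (Fintype.equivOfCardEq ?_)
      fin_cases k
      · exact hc0.trans hb0.symm
      · exact hc1.trans hb1.symm
      · exact hc2.trans hb2.symm
      · exact hc3.trans hb3.symm
    rw [Fin.prod_univ_four]
    rw [heqk 0, heqk 1, heqk 2, heqk 3, hc0, hc1, hc2, hc3]
    simp [Nat.factorial]
  -- assembly
  have hNat : Nat.card {ω : Fin m ≃ E // P ω} = (Finset.univ.filter P).card := by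
    rw [Nat.card_eq_fintype_card, Fintype.card_subtype]
  have hmaps : ∀ ω ∈ Finset.univ.filter P, Tmap ω ∈ Finset.powersetCard s Finset.univ := by
    intro ω _
    rw [Finset.mem_powersetCard_univ]
    exact hTcard ω
  have hsplit := Finset.card_eq_sum_card_fiberwise hmaps
  have hterm : ∀ T ∈ Finset.powersetCard s Finset.univ,
      ((Finset.univ.filter P).filter (fun ω => Tmap ω = T)).card
        = Nat.factorial a * Nat.factorial b * Nat.factorial (m - s) := by
    intro T hTmem
    have hTs : T.card = s := Finset.mem_powersetCard_univ.mp hTmem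
    rw [Finset.filter_filter]
    rw [Finset.filter_congr (fun ω _ => key T hTs ω)]
    exact fib T hTs
  calc Nat.card {ω : Fin m ≃ E // P ω}
      = (Finset.univ.filter P).card := hNat
    _ = ∑ T ∈ Finset.powersetCard s Finset.univ,
          ((Finset.univ.filter P).filter (fun ω => Tmap ω = T)).card := hsplit
    _ = ∑ _T ∈ Finset.powersetCard s Finset.univ,
          Nat.factorial a * Nat.factorial b * Nat.factorial (m - s) :=
        Finset.sum_congr rfl hterm
    _ = (Finset.powersetCard s (Finset.univ : Finset (Fin m))).card *
          (Nat.factorial a * Nat.factorial b * Nat.factorial (m - s)) := by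
        rw [Finset.sum_const, smul_eq_mul]
    _ = m.choose s * (Nat.factorial a * Nat.factorial b * Nat.factorial (m - s)) := by
        rw [Finset.card_powersetCard, Finset.card_univ, Fintype.card_fin]
    _ = m.choose (a + b + 1) * Nat.factorial a * Nat.factorial b
          * Nat.factorial (m - (a + b + 1)) := by
        rw [hs]
        ring

end main

section graphchar

variable {V : Type*} [Fintype V] [DecidableEq V]

lemma mem_prefixEdges_iff {s : Finset (Sym2 V)} (ω : Fin s.card ≃ {e : Sym2 V // e ∈ s})
    (i : ℕ) (x : {e : Sym2 V // e ∈ s}) :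
    x.1 ∈ prefixEdges ω i ↔ (ω.symm x : ℕ) < i := by
  unfold prefixEdges
  simp only [Finset.mem_image, Finset.mem_filter, Finset.mem_univ, true_and]
  constructor
  · rintro ⟨j, hj, hje⟩
    have hxe : ω j = x := Subtype.ext hje
    rwa [← hxe, Equiv.symm_apply_apply]
  · intro hx
    exact ⟨ω.symm x, hx, by simp⟩

lemma prefixEdges_subset {s : Finset (Sym2 V)} (ω : Fin s.card ≃ {e : Sym2 V // e ∈ s})
    (i : ℕ) : prefixEdges ω i ⊆ s := by
  intro e he
  unfold prefixEdges at he
  simp only [Finset.mem_image, Finset.mem_filter, Finset.mem_univ, true_and] at he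
  obtain ⟨j, _, rfl⟩ := he
  exact (ω j).2

lemma degIn_mono {s t : Finset (Sym2 V)} (hst : s ⊆ t) (w : V) :
    degIn s w ≤ degIn t w :=
  Finset.card_le_card (Finset.filter_subset_filter _ hst)

lemma degIn_edgeFinset (J : SimpleGraph V) [DecidableRel J.Adj] (w : V) :
    degIn J.edgeFinset w = J.degree w := by
  rw [degIn, ← SimpleGraph.incidenceFinset_eq_filter, SimpleGraph.card_incidenceFinset_eq_degree]

variable (G J : SimpleGraph V) [DecidableRel G.Adj] [DecidableRel J.Adj]

lemma deg_bound_low (δ : ℕ) (hδ : 1 ≤ δ) (hJG : J ≤ G) (hJ : J.IsRegularOfDegree δ)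
    {u v : V} (huv : J.Adj u v)
    (ω : Fin G.edgeFinset.card ≃ {e : Sym2 V // e ∈ G.edgeFinset})
    (e₀ : {e : Sym2 V // e ∈ G.edgeFinset}) (he₀ : e₀.1 = s(u, v))
    {w : V} (hw : w ∈ e₀.1)
    (hXw : ∀ x : {e : Sym2 V // e ∈ G.edgeFinset}, w ∈ x.1 → x.1 ∉ J.edgeFinset →
      (ω.symm e₀ : ℕ) < (ω.symm x : ℕ))
    {i : ℕ} (hi : i ≤ (ω.symm e₀ : ℕ)) :
    degIn (prefixEdges ω i) w < δ := by
  have hJw : (J.edgeFinset.filter (fun e => w ∈ e)).card = δ := by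
    rw [show J.edgeFinset.filter (fun e => w ∈ e) = _ from rfl]
    have := degIn_edgeFinset J w
    rw [degIn] at this
    rw [this]
    exact hJ w
  have he₀J : e₀.1 ∈ J.edgeFinset.filter (fun e => w ∈ e) := by
    refine Finset.mem_filter.mpr ⟨?_, hw⟩
    rw [he₀, SimpleGraph.mem_edgeFinset]
    exact huv
  have hsub : (prefixEdges ω i).filter (fun e => w ∈ e) ⊆
      (J.edgeFinset.filter (fun e => w ∈ e)).erase e₀.1 := by
    intro e he
    rcases Finset.mem_filter.mp he with ⟨hep, hew⟩
    have heG : e ∈ G.edgeFinset := prefixEdges_subset ω i hep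
    have hpos : (ω.symm ⟨e, heG⟩ : ℕ) < i := (mem_prefixEdges_iff ω i ⟨e, heG⟩).mp hep
    have heJ : e ∈ J.edgeFinset := by
      by_contra hne
      have := hXw ⟨e, heG⟩ hew hne
      omega
    have hene : e ≠ e₀.1 := by
      intro hee
      have : (⟨e, heG⟩ : {e : Sym2 V // e ∈ G.edgeFinset}) = e₀ := Subtype.ext hee
      rw [this] at hpos
      omega
    exact Finset.mem_erase.mpr ⟨hene, Finset.mem_filter.mpr ⟨heJ, hew⟩⟩
  have hcard := Finset.card_le_card hsub
  rw [Finset.card_erase_of_mem he₀J, hJw] at hcard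
  rw [degIn]
  omega

lemma Xw_after (δ : ℕ) (hδ : 1 ≤ δ) (hJG : J ≤ G) (hJ : J.IsRegularOfDegree δ)
    {u v : V} (huv : J.Adj u v)
    (ω : Fin G.edgeFinset.card ≃ {e : Sym2 V // e ∈ G.edgeFinset})
    (e₀ : {e : Sym2 V // e ∈ G.edgeFinset}) (he₀ : e₀.1 = s(u, v))
    (hApart : ∀ x : {e : Sym2 V // e ∈ G.edgeFinset}, x.1 ∈ J.edgeFinset → x.1 ≠ e₀.1 →
      (ω.symm x : ℕ) < (ω.symm e₀ : ℕ))
    {w : V} (hw : w ∈ e₀.1)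
    (hdeg : degIn (prefixEdges ω (ω.symm e₀ : ℕ)) w < δ) :
    ∀ x : {e : Sym2 V // e ∈ G.edgeFinset}, w ∈ x.1 → x.1 ∉ J.edgeFinset →
      (ω.symm e₀ : ℕ) < (ω.symm x : ℕ) := by
  intro x hwx hxJ
  by_contra hcon
  push_neg at hcon
  have hxne : x ≠ e₀ := by
    intro hh
    apply hxJ
    rw [hh, he₀, SimpleGraph.mem_edgeFinset]
    exact huv
  have hlt : (ω.symm x : ℕ) < (ω.symm e₀ : ℕ) := by
    rcases Nat.lt_or_ge (ω.symm x : ℕ) (ω.symm e₀ : ℕ) with hh | hh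
    · exact hh
    · exfalso
      have : (ω.symm x : ℕ) = (ω.symm e₀ : ℕ) := by omega
      have h2 : ω.symm x = ω.symm e₀ := Fin.ext this
      exact hxne (ω.symm.injective h2)
  have hJw : (J.edgeFinset.filter (fun e => w ∈ e)).card = δ := by
    have := degIn_edgeFinset J w
    rw [degIn] at this
    rw [this]
    exact hJ w
  have he₀J : e₀.1 ∈ J.edgeFinset.filter (fun e => w ∈ e) := by
    refine Finset.mem_filter.mpr ⟨?_, hw⟩
    rw [he₀, SimpleGraph.mem_edgeFinset]
    exact huv
  have hsub : insert x.1 ((J.edgeFinset.filter (fun e => w ∈ e)).erase e₀.1) ⊆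
      (prefixEdges ω (ω.symm e₀ : ℕ)).filter (fun e => w ∈ e) := by
    intro e he
    rcases Finset.mem_insert.mp he with rfl | he
    · refine Finset.mem_filter.mpr ⟨?_, hwx⟩
      rw [mem_prefixEdges_iff ω _ x]
      exact hlt
    · rcases Finset.mem_erase.mp he with ⟨hene, heJ⟩
      rcases Finset.mem_filter.mp heJ with ⟨heJ', hew⟩
      have heG : e ∈ G.edgeFinset := SimpleGraph.edgeFinset_mono hJG heJ'
      refine Finset.mem_filter.mpr ⟨?_, hew⟩
      rw [mem_prefixEdges_iff ω _ ⟨e, heG⟩]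
      exact hApart ⟨e, heG⟩ heJ' hene
  have hxnotin : x.1 ∉ (J.edgeFinset.filter (fun e => w ∈ e)).erase e₀.1 := by
    intro hh
    exact hxJ (Finset.mem_filter.mp (Finset.mem_erase.mp hh).2).1
  have hcard := Finset.card_le_card hsub
  rw [Finset.card_insert_of_notMem hxnotin, Finset.card_erase_of_mem he₀J, hJw] at hcard
  rw [degIn] at hdeg
  omega

lemma stopIndex_eq_of (δ : ℕ) (hδ : 1 ≤ δ) (hJG : J ≤ G) (hJ : J.IsRegularOfDegree δ)
    {u v : V} (huv : J.Adj u v)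
    (ω : Fin G.edgeFinset.card ≃ {e : Sym2 V // e ∈ G.edgeFinset})
    (e₀ : {e : Sym2 V // e ∈ G.edgeFinset}) (he₀ : e₀.1 = s(u, v))
    (hApart : ∀ x : {e : Sym2 V // e ∈ G.edgeFinset}, x.1 ∈ J.edgeFinset → x.1 ≠ e₀.1 →
      (ω.symm x : ℕ) < (ω.symm e₀ : ℕ))
    (hXu : ∀ x : {e : Sym2 V // e ∈ G.edgeFinset}, u ∈ x.1 → x.1 ∉ J.edgeFinset →
      (ω.symm e₀ : ℕ) < (ω.symm x : ℕ)) :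
    stopIndex δ ω = (ω.symm e₀ : ℕ) + 1 := by
  have hJsub : J.edgeFinset ⊆ prefixEdges ω ((ω.symm e₀ : ℕ) + 1) := by
    intro e he
    have heG : e ∈ G.edgeFinset := SimpleGraph.edgeFinset_mono hJG he
    rw [show e = (⟨e, heG⟩ : {e : Sym2 V // e ∈ G.edgeFinset}).1 from rfl,
      mem_prefixEdges_iff ω _ ⟨e, heG⟩]
    by_cases hee : e = e₀.1
    · have : (⟨e, heG⟩ : {e : Sym2 V // e ∈ G.edgeFinset}) = e₀ := Subtype.ext hee
      rw [this]
      omega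
    · have := hApart ⟨e, heG⟩ he hee
      omega
  have hmem : ((ω.symm e₀ : ℕ) + 1) ∈ {i | ∀ w : V, δ ≤ degIn (prefixEdges ω i) w} := by
    intro w
    calc δ = J.degree w := (hJ w).symm
      _ = degIn J.edgeFinset w := (degIn_edgeFinset J w).symm
      _ ≤ degIn (prefixEdges ω ((ω.symm e₀ : ℕ) + 1)) w := degIn_mono hJsub w
  apply le_antisymm
  · exact Nat.sInf_le hmem
  · apply le_csInf ⟨_, hmem⟩
    intro i hi
    by_contra hcon
    push_neg at hcon
    have hile : i ≤ (ω.symm e₀ : ℕ) := by omega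
    have := deg_bound_low G J δ hδ hJG hJ huv ω e₀ he₀
      (by rw [he₀]; exact Sym2.mem_mk_left u v) hXu hile
    have h2 := hi u
    omega

lemma event_iff (δ : ℕ) (hδ : 1 ≤ δ) (hJG : J ≤ G) (hJ : J.IsRegularOfDegree δ)
    {u v : V} (huv : J.Adj u v) (heuv : s(u, v) ∈ G.edgeFinset)
    (ω : Fin G.edgeFinset.card ≃ {e : Sym2 V // e ∈ G.edgeFinset}) :
    (J.edgeSet ⊆ ↑(finalEdges δ ω) ∧ lastEdgeIs δ ω s(u, v)) ↔
      ((∀ x : {e : Sym2 V // e ∈ G.edgeFinset}, x.1 ∈ J.edgeFinset → x.1 ≠ s(u, v) →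
          (ω.symm x : ℕ) < (ω.symm ⟨s(u, v), heuv⟩ : ℕ)) ∧
        ((∀ x : {e : Sym2 V // e ∈ G.edgeFinset}, u ∈ x.1 → x.1 ∉ J.edgeFinset →
            (ω.symm ⟨s(u, v), heuv⟩ : ℕ) < (ω.symm x : ℕ)) ∨
          (∀ x : {e : Sym2 V // e ∈ G.edgeFinset}, v ∈ x.1 → x.1 ∉ J.edgeFinset →
            (ω.symm ⟨s(u, v), heuv⟩ : ℕ) < (ω.symm x : ℕ)))) := by
  set e₀ : {e : Sym2 V // e ∈ G.edgeFinset} := ⟨s(u, v), heuv⟩ with he₀def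
  have he₀ : e₀.1 = s(u, v) := rfl
  set t : ℕ := (ω.symm e₀ : ℕ) with htdef
  constructor
  · rintro ⟨hsub, hlast⟩
    rcases hlast with ⟨h1, h2⟩
    have ht1 : t < stopIndex δ ω := by
      have := (mem_prefixEdges_iff ω (stopIndex δ ω) e₀).mp h1
      omega
    have ht2 : ¬ t < stopIndex δ ω - 1 := by
      intro hh
      exact h2 ((mem_prefixEdges_iff ω (stopIndex δ ω - 1) e₀).mpr hh)
    have hk : stopIndex δ ω = t + 1 := by omega
    have hApart : ∀ x : {e : Sym2 V // e ∈ G.edgeFinset}, x.1 ∈ J.edgeFinset →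
        x.1 ≠ s(u, v) → (ω.symm x : ℕ) < t := by
      intro x hxJ hxne
      have hxE : x.1 ∈ finalEdges δ ω := by
        have : x.1 ∈ J.edgeSet := SimpleGraph.mem_edgeFinset.mp hxJ
        exact hsub this
      rw [finalEdges] at hxE
      have := (mem_prefixEdges_iff ω (stopIndex δ ω) x).mp hxE
      rw [hk] at this
      have hne : (ω.symm x : ℕ) ≠ t := by
        intro hh
        exact hxne (congrArg Subtype.val (ω.symm.injective (Fin.ext hh)))
      omega
    refine ⟨hApart, ?_⟩
    have htnot : t ∉ {i | ∀ w : V, δ ≤ degIn (prefixEdges ω i) w} := by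
      apply Nat.notMem_of_lt_sInf
      rw [stopIndex] at ht1
      exact ht1
    simp only [Set.mem_setOf_eq, not_forall, not_le] at htnot
    obtain ⟨w, hw⟩ := htnot
    by_cases hwu : w = u
    · exact Or.inl (Xw_after G J δ hδ hJG hJ huv ω e₀ he₀ hApart
        (by rw [he₀]; exact Sym2.mem_mk_left u v) (hwu ▸ hw))
    by_cases hwv : w = v
    · exact Or.inr (Xw_after G J δ hδ hJG hJ huv ω e₀ he₀ hApart
        (by rw [he₀]; exact Sym2.mem_mk_right u v) (hwv ▸ hw))
    · exfalso
      have hsub2 : J.edgeFinset.filter (fun e => w ∈ e) ⊆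
          (prefixEdges ω t).filter (fun e => w ∈ e) := by
        intro e he
        rcases Finset.mem_filter.mp he with ⟨heJ, hew⟩
        have heG : e ∈ G.edgeFinset := SimpleGraph.edgeFinset_mono hJG heJ
        have hene : e ≠ s(u, v) := by
          intro hh
          rw [hh] at hew
          rcases Sym2.mem_iff.mp hew with hh' | hh'
          · exact hwu hh'
          · exact hwv hh'
        refine Finset.mem_filter.mpr ⟨?_, hew⟩
        rw [mem_prefixEdges_iff ω _ ⟨e, heG⟩]
        exact hApart ⟨e, heG⟩ heJ hene
      have hcard := Finset.card_le_card hsub2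
      have hJw : (J.edgeFinset.filter (fun e => w ∈ e)).card = δ := by
        have := degIn_edgeFinset J w
        rw [degIn] at this
        rw [this]
        exact hJ w
      rw [degIn] at hw
      omega
  · rintro ⟨hApart, hX⟩
    have hApart' : ∀ x : {e : Sym2 V // e ∈ G.edgeFinset}, x.1 ∈ J.edgeFinset →
        x.1 ≠ e₀.1 → (ω.symm x : ℕ) < (ω.symm e₀ : ℕ) := hApart
    have hstop : stopIndex δ ω = t + 1 := by
      rcases hX with hXu | hXv
      · exact stopIndex_eq_of G J δ hδ hJG hJ huv ω e₀ he₀ hApart' hXu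
      · exact stopIndex_eq_of G J δ hδ hJG hJ huv.symm ω e₀ (he₀.trans (Sym2.eq_swap))
          hApart' hXv
    constructor
    · intro e he
      have heJ : e ∈ J.edgeFinset := SimpleGraph.mem_edgeFinset.mpr he
      have heG : e ∈ G.edgeFinset := SimpleGraph.edgeFinset_mono hJG heJ
      rw [finalEdges, hstop]
      show e ∈ (prefixEdges ω (t + 1) : Finset (Sym2 V))
      rw [show e = (⟨e, heG⟩ : {e : Sym2 V // e ∈ G.edgeFinset}).1 from rfl,
        mem_prefixEdges_iff ω _ ⟨e, heG⟩]
      by_cases hee : e = e₀.1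
      · have : (⟨e, heG⟩ : {e : Sym2 V // e ∈ G.edgeFinset}) = e₀ := Subtype.ext hee
        rw [this]
        omega
      · have := hApart' ⟨e, heG⟩ heJ hee
        omega
    · constructor
      · rw [hstop]
        rw [show s(u,v) = e₀.1 from rfl, mem_prefixEdges_iff ω _ e₀]
        omega
      · rw [hstop]
        rw [show s(u,v) = e₀.1 from rfl, mem_prefixEdges_iff ω _ e₀]
        omega

end graphchar



lemma sum_card_le {E : Type*} [Fintype E] [DecidableEq E] (A B : Finset E) (e₀ : E)
    (hA : e₀ ∉ A) (hB : e₀ ∉ B) (hAB : Disjoint A B) :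
    A.card + B.card + 1 ≤ Fintype.card E := by
  have hScard : (A ∪ {e₀} ∪ B).card = A.card + B.card + 1 := by
    rw [Finset.card_union_of_disjoint, Finset.card_union_of_disjoint]
    · simp; ring
    · simpa using hA
    · rw [Finset.disjoint_union_left]
      exact ⟨hAB, by simpa using hB⟩
  calc A.card + B.card + 1 = (A ∪ {e₀} ∪ B).card := hScard.symm
    _ ≤ (Finset.univ : Finset E).card := Finset.card_le_card (Finset.subset_univ _)
    _ = Fintype.card E := Finset.card_univ

lemma prob_term (m h d : ℕ) (hh : 1 ≤ h) (hsm : h + d ≤ m) :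
    ((m.choose (h - 1 + d + 1) * Nat.factorial (h - 1) * Nat.factorial d *
        Nat.factorial (m - (h - 1 + d + 1)) : ℕ) : ℝ) / (Nat.factorial m : ℝ)
      = 1 / h * (1 / ((h + d).choose h : ℝ)) := by
  have hs : h - 1 + d + 1 = h + d := by omega
  rw [hs]
  have e1 : m.choose (h + d) * ((h + d).factorial * (m - (h + d)).factorial)
      = m.factorial := by rw [← mul_assoc]; exact Nat.choose_mul_factorial_mul_factorial hsm
  have e2 : (h + d).choose h * (h.factorial * d.factorial) = (h + d).factorial := by
    have := Nat.choose_mul_factorial_mul_factorial (Nat.le_add_right h d)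
    rw [Nat.add_sub_cancel_left] at this
    rw [← mul_assoc]
    exact this
  have e3 : h * (h - 1).factorial = h.factorial := Nat.mul_factorial_pred (by omega)
  have p1 : (0 : ℝ) < m.choose (h + d) := by
    exact_mod_cast Nat.choose_pos hsm
  have p2 : (0 : ℝ) < (h + d).choose h := by
    exact_mod_cast Nat.choose_pos (Nat.le_add_right h d)
  have p3 : (0 : ℝ) < (m - (h + d)).factorial := by exact_mod_cast Nat.factorial_pos _
  have p4 : (0 : ℝ) < (h - 1).factorial := by exact_mod_cast Nat.factorial_pos _
  have p5 : (0 : ℝ) < d.factorial := by exact_mod_cast Nat.factorial_pos _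
  have p6 : (0 : ℝ) < (h : ℝ) := by exact_mod_cast hh
  have p7 : (0 : ℝ) < m.factorial := by exact_mod_cast Nat.factorial_pos _
  have e1' : ((m.choose (h + d) : ℝ)) * (((h + d).factorial : ℝ) * ((m - (h + d)).factorial : ℝ))
      = (m.factorial : ℝ) := by exact_mod_cast e1
  have e2' : (((h + d).choose h : ℝ)) * ((h.factorial : ℝ) * (d.factorial : ℝ))
      = ((h + d).factorial : ℝ) := by exact_mod_cast e2
  have e3' : (h : ℝ) * ((h - 1).factorial : ℝ) = (h.factorial : ℝ) := by exact_mod_cast e3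
  push_cast
  rw [← e1', ← e2', ← e3']
  field_simp

set_option maxHeartbeats 2000000 in
/-- Let `G` be a finite simple graph with minimum degree at least `δ ≥ 1`, let `J` be a
`δ`-regular spanning subgraph of `G` with `h` edges, and let `uv` be an edge of `J`;
write `Δ(w) = deg_G(w) − δ`.  The probability that `J ⊆ G_ω` and `e_{k(ω)} = uv` equals
`(1/h)·[1/C(h+Δ(u),h) + 1/C(h+Δ(v),h) − 1/C(h+Δ(u)+Δ(v),h)]`. -/
theorem probability_subgraph_with_given_last_edge
    {V : Type*} [Fintype V] [DecidableEq V]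
    (G J : SimpleGraph V) [DecidableRel G.Adj] [DecidableRel J.Adj]
    (δ : ℕ) (hδ : 1 ≤ δ) (hGdeg : ∀ w : V, δ ≤ G.degree w)
    (hJG : J ≤ G) (hJ : J.IsRegularOfDegree δ)
    (u v : V) (huv : J.Adj u v) (h : ℕ) (hh : h = J.edgeFinset.card) :
    ({ω : Fin G.edgeFinset.card ≃ {e : Sym2 V // e ∈ G.edgeFinset} |
        J.edgeSet ⊆ ↑(finalEdges δ ω) ∧ lastEdgeIs δ ω s(u, v)}.ncard : ℝ) /
      (Fintype.card (Fin G.edgeFinset.card ≃ {e : Sym2 V // e ∈ G.edgeFinset}) : ℝ) =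
    (1 / (h : ℝ)) *
      (1 / (((h + (G.degree u - δ)).choose h : ℝ)) +
        1 / (((h + (G.degree v - δ)).choose h : ℝ)) -
        1 / (((h + (G.degree u - δ) + (G.degree v - δ)).choose h : ℝ))) := by
  classical
  have huvG : G.Adj u v := hJG huv
  have heuv : s(u, v) ∈ G.edgeFinset := SimpleGraph.mem_edgeFinset.mpr huvG
  have huvJ : s(u, v) ∈ J.edgeFinset := SimpleGraph.mem_edgeFinset.mpr huv
  have hm : Fintype.card {e : Sym2 V // e ∈ G.edgeFinset} = G.edgeFinset.card :=
    Fintype.card_coe _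
  set m := G.edgeFinset.card with hmdef
  set e₀ : {e : Sym2 V // e ∈ G.edgeFinset} := ⟨s(u, v), heuv⟩ with he₀def
  set A : Finset {e : Sym2 V // e ∈ G.edgeFinset} :=
    (J.edgeFinset.erase s(u, v)).subtype (· ∈ G.edgeFinset) with hAdef
  set Xu : Finset {e : Sym2 V // e ∈ G.edgeFinset} :=
    ((G.edgeFinset.filter (fun e => u ∈ e)) \ J.edgeFinset).subtype (· ∈ G.edgeFinset)
    with hXudef
  set Xv : Finset {e : Sym2 V // e ∈ G.edgeFinset} :=
    ((G.edgeFinset.filter (fun e => v ∈ e)) \ J.edgeFinset).subtype (· ∈ G.edgeFinset)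
    with hXvdef
  have hmemA : ∀ x : {e : Sym2 V // e ∈ G.edgeFinset},
      x ∈ A ↔ x.1 ∈ J.edgeFinset ∧ x.1 ≠ s(u, v) := by
    intro x
    rw [hAdef, Finset.mem_subtype, Finset.mem_erase]
    tauto
  have hmemXu : ∀ x : {e : Sym2 V // e ∈ G.edgeFinset},
      x ∈ Xu ↔ u ∈ x.1 ∧ x.1 ∉ J.edgeFinset := by
    intro x
    rw [hXudef, Finset.mem_subtype, Finset.mem_sdiff, Finset.mem_filter]
    have := x.2
    tauto
  have hmemXv : ∀ x : {e : Sym2 V // e ∈ G.edgeFinset},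
      x ∈ Xv ↔ v ∈ x.1 ∧ x.1 ∉ J.edgeFinset := by
    intro x
    rw [hXvdef, Finset.mem_subtype, Finset.mem_sdiff, Finset.mem_filter]
    have := x.2
    tauto
  -- cardinalities
  have hh1 : 1 ≤ h := by
    rw [hh]
    exact Finset.card_pos.mpr ⟨_, huvJ⟩
  have hAcard : A.card = h - 1 := by
    rw [hAdef, Finset.card_subtype, Finset.filter_true_of_mem
      (fun e he => SimpleGraph.edgeFinset_mono hJG (Finset.mem_of_mem_erase he)),
      Finset.card_erase_of_mem huvJ, hh]
  have hdegG : ∀ w : V, (G.edgeFinset.filter (fun e => w ∈ e)).card = G.degree w := by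
    intro w
    have := degIn_edgeFinset G w
    rwa [degIn] at this
  have hdegJ : ∀ w : V, (J.edgeFinset.filter (fun e => w ∈ e)).card = δ := by
    intro w
    have := degIn_edgeFinset J w
    rw [degIn] at this
    rw [this]
    exact hJ w
  have hXcard : ∀ w : V,
      ((((G.edgeFinset.filter (fun e => w ∈ e)) \ J.edgeFinset).subtype
        (· ∈ G.edgeFinset)).card) = G.degree w - δ := by
    intro w
    rw [Finset.card_subtype, Finset.filter_true_of_mem
      (fun e he => (Finset.mem_filter.mp (Finset.mem_sdiff.mp he).1).1)]
    have hsd : (G.edgeFinset.filter (fun e => w ∈ e)) \ J.edgeFinset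
        = (G.edgeFinset.filter (fun e => w ∈ e)) \ (J.edgeFinset.filter (fun e => w ∈ e)) := by
      ext e
      simp only [Finset.mem_sdiff, Finset.mem_filter]
      tauto
    rw [hsd, Finset.card_sdiff_of_subset
      (Finset.filter_subset_filter _ (SimpleGraph.edgeFinset_mono hJG)), hdegG w, hdegJ w]
  have hXucard : Xu.card = G.degree u - δ := hXcard u
  have hXvcard : Xv.card = G.degree v - δ := hXcard v
  -- memberships and disjointness
  have he₀A : e₀ ∉ A := by
    rw [hmemA]
    simp
    exact fun _ => rfl
  have he₀Xu : e₀ ∉ Xu := by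
    rw [hmemXu]
    push_neg
    intro _
    exact huvJ
  have he₀Xv : e₀ ∉ Xv := by
    rw [hmemXv]
    push_neg
    intro _
    exact huvJ
  have hdAXu : Disjoint A Xu := by
    rw [Finset.disjoint_left]
    intro x hxA hxXu
    exact ((hmemXu x).mp hxXu).2 ((hmemA x).mp hxA).1
  have hdAXv : Disjoint A Xv := by
    rw [Finset.disjoint_left]
    intro x hxA hxXv
    exact ((hmemXv x).mp hxXv).2 ((hmemA x).mp hxA).1
  have hdXuXv : Disjoint Xu Xv := by
    rw [Finset.disjoint_left]
    intro x hxu hxv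
    rcases (hmemXu x).mp hxu with ⟨hux, hxJ⟩
    rcases (hmemXv x).mp hxv with ⟨hvx, -⟩
    have : x.1 = s(u, v) := (Sym2.mem_and_mem_iff huv.ne).mp ⟨hux, hvx⟩
    exact hxJ (this ▸ huvJ)
  have he₀Xuv : e₀ ∉ Xu ∪ Xv := by
    rw [Finset.mem_union]
    push_neg
    exact ⟨he₀Xu, he₀Xv⟩
  have hdAXuv : Disjoint A (Xu ∪ Xv) := by
    rw [Finset.disjoint_union_right]
    exact ⟨hdAXu, hdAXv⟩
  have hXuvcard : (Xu ∪ Xv).card = (G.degree u - δ) + (G.degree v - δ) := by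
    rw [Finset.card_union_of_disjoint hdXuXv, hXucard, hXvcard]
  -- the event as a union
  have hEvent : {ω : Fin m ≃ {e : Sym2 V // e ∈ G.edgeFinset} |
        J.edgeSet ⊆ ↑(finalEdges δ ω) ∧ lastEdgeIs δ ω s(u, v)}
      = {ω : Fin m ≃ {e : Sym2 V // e ∈ G.edgeFinset} |
          (∀ x ∈ A, (ω.symm x : ℕ) < (ω.symm e₀ : ℕ)) ∧
          (∀ y ∈ Xu, (ω.symm e₀ : ℕ) < (ω.symm y : ℕ))}
        ∪ {ω : Fin m ≃ {e : Sym2 V // e ∈ G.edgeFinset} |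
          (∀ x ∈ A, (ω.symm x : ℕ) < (ω.symm e₀ : ℕ)) ∧
          (∀ y ∈ Xv, (ω.symm e₀ : ℕ) < (ω.symm y : ℕ))} := by
    ext ω
    simp only [Set.mem_setOf_eq, Set.mem_union]
    rw [event_iff G J δ hδ hJG hJ huv heuv ω]
    simp only [hmemA, hmemXu, hmemXv, and_imp]
    exact and_or_left
  -- inclusion-exclusion
  have hinter : ({ω : Fin m ≃ {e : Sym2 V // e ∈ G.edgeFinset} |
          (∀ x ∈ A, (ω.symm x : ℕ) < (ω.symm e₀ : ℕ)) ∧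
          (∀ y ∈ Xu, (ω.symm e₀ : ℕ) < (ω.symm y : ℕ))}
        ∩ {ω : Fin m ≃ {e : Sym2 V // e ∈ G.edgeFinset} |
          (∀ x ∈ A, (ω.symm x : ℕ) < (ω.symm e₀ : ℕ)) ∧
          (∀ y ∈ Xv, (ω.symm e₀ : ℕ) < (ω.symm y : ℕ))})
      = {ω : Fin m ≃ {e : Sym2 V // e ∈ G.edgeFinset} |
          (∀ x ∈ A, (ω.symm x : ℕ) < (ω.symm e₀ : ℕ)) ∧
          (∀ y ∈ Xu ∪ Xv, (ω.symm e₀ : ℕ) < (ω.symm y : ℕ))} := by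
    ext ω
    simp only [Set.mem_inter_iff, Set.mem_setOf_eq]
    constructor
    · rintro ⟨⟨h1, h2⟩, ⟨-, h4⟩⟩
      refine ⟨h1, fun y hy => ?_⟩
      rcases Finset.mem_union.mp hy with hy | hy
      · exact h2 y hy
      · exact h4 y hy
    · rintro ⟨h1, h2⟩
      exact ⟨⟨h1, fun y hy => h2 y (Finset.mem_union_left _ hy)⟩,
        ⟨h1, fun y hy => h2 y (Finset.mem_union_right _ hy)⟩⟩
  -- counts via count_main
  have hcount : ∀ (B : Finset {e : Sym2 V // e ∈ G.edgeFinset}),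
      e₀ ∉ B → Disjoint A B →
      ({ω : Fin m ≃ {e : Sym2 V // e ∈ G.edgeFinset} |
          (∀ x ∈ A, (ω.symm x : ℕ) < (ω.symm e₀ : ℕ)) ∧
          (∀ y ∈ B, (ω.symm e₀ : ℕ) < (ω.symm y : ℕ))}).ncard
        = m.choose (A.card + B.card + 1) * Nat.factorial A.card * Nat.factorial B.card *
            Nat.factorial (m - (A.card + B.card + 1)) := by
    intro B hB hAB
    rw [← Nat.card_coe_set_eq, Set.coe_setOf]
    exact count_main hm A B e₀ he₀A hB hAB
  have hNu := hcount Xu he₀Xu hdAXu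
  have hNv := hcount Xv he₀Xv hdAXv
  have hNuv := hcount (Xu ∪ Xv) he₀Xuv hdAXuv
  have hsu : A.card + Xu.card + 1 ≤ m := by
    rw [← hm]
    exact sum_card_le A Xu e₀ he₀A he₀Xu hdAXu
  have hsv : A.card + Xv.card + 1 ≤ m := by
    rw [← hm]
    exact sum_card_le A Xv e₀ he₀A he₀Xv hdAXv
  have hsuv : A.card + (Xu ∪ Xv).card + 1 ≤ m := by
    rw [← hm]
    exact sum_card_le A (Xu ∪ Xv) e₀ he₀A he₀Xuv hdAXuv
  rw [hAcard, hXucard] at hNu hsu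
  rw [hAcard, hXvcard] at hNv hsv
  rw [hAcard, hXuvcard] at hNuv hsuv
  -- probabilities of each piece
  have htu : ((({ω : Fin m ≃ {e : Sym2 V // e ∈ G.edgeFinset} |
          (∀ x ∈ A, (ω.symm x : ℕ) < (ω.symm e₀ : ℕ)) ∧
          (∀ y ∈ Xu, (ω.symm e₀ : ℕ) < (ω.symm y : ℕ))}).ncard : ℕ) : ℝ)
        / (Nat.factorial m : ℝ)
      = 1 / (h : ℝ) * (1 / (((h + (G.degree u - δ)).choose h : ℕ) : ℝ)) := by
    rw [hNu]
    exact_mod_cast prob_term m h (G.degree u - δ) hh1 (by omega)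
  have htv : ((({ω : Fin m ≃ {e : Sym2 V // e ∈ G.edgeFinset} |
          (∀ x ∈ A, (ω.symm x : ℕ) < (ω.symm e₀ : ℕ)) ∧
          (∀ y ∈ Xv, (ω.symm e₀ : ℕ) < (ω.symm y : ℕ))}).ncard : ℕ) : ℝ)
        / (Nat.factorial m : ℝ)
      = 1 / (h : ℝ) * (1 / (((h + (G.degree v - δ)).choose h : ℕ) : ℝ)) := by
    rw [hNv]
    exact_mod_cast prob_term m h (G.degree v - δ) hh1 (by omega)
  have htuv : ((({ω : Fin m ≃ {e : Sym2 V // e ∈ G.edgeFinset} |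
          (∀ x ∈ A, (ω.symm x : ℕ) < (ω.symm e₀ : ℕ)) ∧
          (∀ y ∈ Xu ∪ Xv, (ω.symm e₀ : ℕ) < (ω.symm y : ℕ))}).ncard : ℕ) : ℝ)
        / (Nat.factorial m : ℝ)
      = 1 / (h : ℝ) *
          (1 / (((h + (G.degree u - δ) + (G.degree v - δ)).choose h : ℕ) : ℝ)) := by
    rw [hNuv]
    have := prob_term m h ((G.degree u - δ) + (G.degree v - δ)) hh1 (by omega)
    rw [show h + ((G.degree u - δ) + (G.degree v - δ))
      = h + (G.degree u - δ) + (G.degree v - δ) from (Nat.add_assoc _ _ _).symm] at this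
    exact_mod_cast this
  -- denominator
  have hden : (Fintype.card (Fin m ≃ {e : Sym2 V // e ∈ G.edgeFinset}) : ℝ)
      = (Nat.factorial m : ℝ) := by
    rw [Fintype.card_equiv (Fintype.equivFinOfCardEq hm).symm, Fintype.card_fin]
  rw [hEvent, hden]
  have hIE := Set.ncard_union_add_ncard_inter
    ({ω : Fin m ≃ {e : Sym2 V // e ∈ G.edgeFinset} |
        (∀ x ∈ A, (ω.symm x : ℕ) < (ω.symm e₀ : ℕ)) ∧
        (∀ y ∈ Xu, (ω.symm e₀ : ℕ) < (ω.symm y : ℕ))})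
    ({ω : Fin m ≃ {e : Sym2 V // e ∈ G.edgeFinset} |
        (∀ x ∈ A, (ω.symm x : ℕ) < (ω.symm e₀ : ℕ)) ∧
        (∀ y ∈ Xv, (ω.symm e₀ : ℕ) < (ω.symm y : ℕ))})
    (Set.toFinite _) (Set.toFinite _)
  rw [hinter] at hIE
  have hmf : (0 : ℝ) < (Nat.factorial m : ℝ) := by exact_mod_cast Nat.factorial_pos m
  have hcast : ((({ω : Fin m ≃ {e : Sym2 V // e ∈ G.edgeFinset} |
          (∀ x ∈ A, (ω.symm x : ℕ) < (ω.symm e₀ : ℕ)) ∧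
          (∀ y ∈ Xu, (ω.symm e₀ : ℕ) < (ω.symm y : ℕ))}
        ∪ {ω : Fin m ≃ {e : Sym2 V // e ∈ G.edgeFinset} |
          (∀ x ∈ A, (ω.symm x : ℕ) < (ω.symm e₀ : ℕ)) ∧
          (∀ y ∈ Xv, (ω.symm e₀ : ℕ) < (ω.symm y : ℕ))}).ncard : ℕ) : ℝ)
      = (({ω : Fin m ≃ {e : Sym2 V // e ∈ G.edgeFinset} |
          (∀ x ∈ A, (ω.symm x : ℕ) < (ω.symm e₀ : ℕ)) ∧
          (∀ y ∈ Xu, (ω.symm e₀ : ℕ) < (ω.symm y : ℕ))}).ncard : ℝ)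
        + (({ω : Fin m ≃ {e : Sym2 V // e ∈ G.edgeFinset} |
          (∀ x ∈ A, (ω.symm x : ℕ) < (ω.symm e₀ : ℕ)) ∧
          (∀ y ∈ Xv, (ω.symm e₀ : ℕ) < (ω.symm y : ℕ))}).ncard : ℝ)
        - (({ω : Fin m ≃ {e : Sym2 V // e ∈ G.edgeFinset} |
          (∀ x ∈ A, (ω.symm x : ℕ) < (ω.symm e₀ : ℕ)) ∧
          (∀ y ∈ Xu ∪ Xv, (ω.symm e₀ : ℕ) < (ω.symm y : ℕ))}).ncard : ℝ) := by
    have h2 := congrArg (fun n : ℕ => (n : ℝ)) hIE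
    push_cast at h2
    linarith
  rw [hcast, sub_div, add_div, htu, htv, htuv]
  push_cast
  ring
end

section
/- Let G be a finite simple graph in which every vertex has degree at least δ, where δ ≥ 1, let J be a δ-regular spanning subgraph of G, let uv be an edge of J, and let ω be a permutation of the edges of G. Then the following are equivalent: (i) J ⊆ G_ω, e_{k(ω)} = uv, and u has degree exactly δ in G_ω; (ii) every edge of J other than uv occurs before uv in the ordering ω, and every edge of G incident to u that does not belong to J occurs after uv in the ordering ω. -/
open Finset

lemma mem_prefixEdges' {V : Type*} [DecidableEq V] {s : Finset (Sym2 V)}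
    (ω : Fin s.card ≃ {e : Sym2 V // e ∈ s}) (i : ℕ) (e : Sym2 V) :
    e ∈ prefixEdges ω i ↔ ∃ he : e ∈ s, ((ω.symm ⟨e, he⟩ : Fin s.card) : ℕ) < i := by
  simp only [prefixEdges, mem_image, mem_filter, mem_univ, true_and]
  constructor
  · rintro ⟨j, hj, rfl⟩
    exact ⟨(ω j).2, by simp [hj]⟩
  · rintro ⟨he, h⟩
    exact ⟨ω.symm ⟨e, he⟩, h, by simp⟩

lemma prefixEdges_card' {V : Type*} [DecidableEq V] {s : Finset (Sym2 V)}
    (ω : Fin s.card ≃ {e : Sym2 V // e ∈ s}) :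
    prefixEdges ω s.card = s := by
  ext e
  rw [mem_prefixEdges']
  constructor
  · rintro ⟨he, _⟩; exact he
  · intro he; exact ⟨he, (ω.symm ⟨e, he⟩).2⟩


/-- Let `G` be a finite simple graph with minimum degree at least `δ ≥ 1`, let `J` be a
`δ`-regular spanning subgraph of `G`, let `uv` be an edge of `J`, and let `ω` be an
ordering of the edges of `G`.  Then `J ⊆ G_ω`, `e_{k(ω)} = uv` and `u` has degree exactly
`δ` in `G_ω` if and only if every edge of `J` other than `uv` occurs before `uv` in `ω`
and every edge of `G` incident to `u` not belonging to `J` occurs after `uv` in `ω`. -/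
theorem subgraph_last_edge_low_degree_iff_order_condition
    {V : Type*} [Fintype V] [DecidableEq V]
    (G J : SimpleGraph V) [DecidableRel G.Adj] [DecidableRel J.Adj]
    (δ : ℕ) (hδ : 1 ≤ δ) (hGdeg : ∀ w : V, δ ≤ G.degree w)
    (hJG : J ≤ G) (hJ : J.IsRegularOfDegree δ)
    (u v : V) (huv : J.Adj u v) (huvG : s(u, v) ∈ G.edgeFinset)
    (ω : Fin G.edgeFinset.card ≃ {e : Sym2 V // e ∈ G.edgeFinset}) :
    (J.edgeSet ⊆ ↑(finalEdges δ ω) ∧ lastEdgeIs δ ω s(u, v) ∧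
        degIn (finalEdges δ ω) u = δ) ↔
      ((∀ e (he : e ∈ G.edgeFinset), e ∈ J.edgeSet → e ≠ s(u, v) →
          ω.symm ⟨e, he⟩ < ω.symm ⟨s(u, v), huvG⟩) ∧
        (∀ e (he : e ∈ G.edgeFinset), u ∈ e → e ∉ J.edgeSet →
          ω.symm ⟨s(u, v), huvG⟩ < ω.symm ⟨e, he⟩)) := by
  classical
  set S : Set ℕ := {i | ∀ w : V, δ ≤ degIn (prefixEdges ω i) w} with hS
  -- basic facts
  have hJedge : ∀ e : Sym2 V, e ∈ J.edgeSet → e ∈ G.edgeFinset := by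
    intro e he
    rw [SimpleGraph.mem_edgeFinset]
    exact SimpleGraph.edgeSet_mono hJG he
  have huvJ : s(u, v) ∈ J.edgeSet := huv
  have hinj : ∀ (e₁ e₂ : Sym2 V) (h₁ : e₁ ∈ G.edgeFinset) (h₂ : e₂ ∈ G.edgeFinset),
      ((ω.symm ⟨e₁, h₁⟩ : Fin _) : ℕ) = ((ω.symm ⟨e₂, h₂⟩ : Fin _) : ℕ) → e₁ = e₂ := by
    intro e₁ e₂ h₁ h₂ h
    have := ω.symm.injective (Fin.ext h)
    exact congrArg Subtype.val this
  have hmono : ∀ i j : ℕ, i ≤ j → prefixEdges ω i ⊆ prefixEdges ω j := by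
    intro i j hij e he
    rw [mem_prefixEdges'] at he ⊢
    obtain ⟨h1, h2⟩ := he
    exact ⟨h1, lt_of_lt_of_le h2 hij⟩
  have hSup : ∀ i j : ℕ, i ≤ j → i ∈ S → j ∈ S := by
    intro i j hij hi w
    exact le_trans (hi w) (Finset.card_le_card
      (Finset.filter_subset_filter _ (hmono i j hij)))
  have hJdegw : ∀ w : V, (J.edgeFinset.filter (fun e => w ∈ e)).card = δ := by
    intro w
    rw [← SimpleGraph.incidenceFinset_eq_filter, SimpleGraph.card_incidenceFinset_eq_degree]
    exact hJ w
  have hmS : G.edgeFinset.card ∈ S := by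
    intro w
    rw [prefixEdges_card']
    calc δ ≤ G.degree w := hGdeg w
      _ = degIn G.edgeFinset w := by
        rw [degIn, ← SimpleGraph.incidenceFinset_eq_filter,
          SimpleGraph.card_incidenceFinset_eq_degree]
  have hSne : S.Nonempty := ⟨_, hmS⟩
  have hkS : stopIndex δ ω ∈ S := Nat.sInf_mem hSne
  have hk_le : ∀ i ∈ S, stopIndex δ ω ≤ i := fun i hi => Nat.sInf_le hi
  have hk_pos : 1 ≤ stopIndex δ ω := by
    by_contra h
    have h0 : stopIndex δ ω = 0 := by omega
    have := hkS u
    rw [h0] at this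
    have hempty : prefixEdges ω 0 = ∅ := by
      ext e; rw [mem_prefixEdges']; simp
    rw [hempty] at this
    simp [degIn] at this
    omega
  constructor
  · rintro ⟨hsub, ⟨hin, hnot⟩, hdeg⟩
    rw [mem_prefixEdges'] at hin hnot
    obtain ⟨_, hin⟩ := hin
    have hnot' : ¬ ((ω.symm ⟨s(u, v), huvG⟩ : Fin _) : ℕ) < stopIndex δ ω - 1 := by
      intro h; exact hnot ⟨huvG, h⟩
    have ht : ((ω.symm ⟨s(u, v), huvG⟩ : Fin _) : ℕ) = stopIndex δ ω - 1 := by omega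
    constructor
    · intro e he heJ hne
      have hef : e ∈ finalEdges δ ω := hsub heJ
      rw [finalEdges, mem_prefixEdges'] at hef
      obtain ⟨_, hlt⟩ := hef
      have hneidx : ((ω.symm ⟨e, he⟩ : Fin _) : ℕ) ≠ ((ω.symm ⟨s(u, v), huvG⟩ : Fin _) : ℕ) := by
        intro h; exact hne (hinj _ _ _ _ h)
      rw [Fin.lt_def]
      omega
    · intro e he hue heJ
      by_contra hle
      push_neg at hle
      rw [Fin.le_def] at hle
      have hef : e ∈ finalEdges δ ω := by
        rw [finalEdges, mem_prefixEdges']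
        exact ⟨he, by omega⟩
      have heJF : e ∉ J.edgeFinset := fun h => heJ (SimpleGraph.mem_edgeFinset.mp h)
      have hJd : J.edgeFinset.filter (fun x => u ∈ x) ⊆
          (finalEdges δ ω).filter (fun x => u ∈ x) := by
        intro x hx
        rw [mem_filter] at hx ⊢
        exact ⟨hsub (SimpleGraph.mem_edgeFinset.mp hx.1), hx.2⟩
      have hins : insert e (J.edgeFinset.filter (fun x => u ∈ x)) ⊆
          (finalEdges δ ω).filter (fun x => u ∈ x) := by
        intro x hx
        rw [Finset.mem_insert] at hx
        rcases hx with rfl | hx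
        · rw [mem_filter]; exact ⟨hef, hue⟩
        · exact hJd hx
      have hcard := Finset.card_le_card hins
      rw [Finset.card_insert_of_notMem (fun h => heJF (Finset.mem_filter.mp h).1),
        hJdegw u] at hcard
      rw [degIn] at hdeg
      omega
  · rintro ⟨h1, h2⟩
    set t : ℕ := ((ω.symm ⟨s(u, v), huvG⟩ : Fin _) : ℕ) with hts
    -- t+1 ∈ S
    have hA : t + 1 ∈ S := by
      intro w
      have hsubw : J.edgeFinset.filter (fun x => w ∈ x) ⊆
          (prefixEdges ω (t + 1)).filter (fun x => w ∈ x) := by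
        intro x hx
        rw [mem_filter] at hx ⊢
        refine ⟨?_, hx.2⟩
        have hxJ : x ∈ J.edgeSet := SimpleGraph.mem_edgeFinset.mp hx.1
        have hxG : x ∈ G.edgeFinset := hJedge x hxJ
        rw [mem_prefixEdges']
        refine ⟨hxG, ?_⟩
        by_cases hxe : x = s(u, v)
        · subst hxe; omega
        · have := h1 x hxG hxJ hxe
          rw [Fin.lt_def] at this
          omega
      calc δ = (J.edgeFinset.filter (fun x => w ∈ x)).card := (hJdegw w).symm
        _ ≤ _ := Finset.card_le_card hsubw
    -- t ∉ S
    have hB : t ∉ S := by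
      intro hcon
      have hsubt : (prefixEdges ω t).filter (fun x => u ∈ x) ⊆
          (J.edgeFinset.filter (fun x => u ∈ x)).erase s(u, v) := by
        intro x hx
        rw [mem_filter, mem_prefixEdges'] at hx
        obtain ⟨⟨hxG, hxlt⟩, hux⟩ := hx
        have hxJ : x ∈ J.edgeSet := by
          by_contra hxJ
          have := h2 x hxG hux hxJ
          rw [Fin.lt_def] at this
          omega
        have hxne : x ≠ s(u, v) := by
          intro h
          subst h
          omega
        rw [Finset.mem_erase, mem_filter]
        exact ⟨hxne, SimpleGraph.mem_edgeFinset.mpr hxJ, hux⟩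
      have := Finset.card_le_card hsubt
      have hcerase : ((J.edgeFinset.filter (fun x => u ∈ x)).erase s(u, v)).card = δ - 1 := by
        rw [Finset.card_erase_of_mem, hJdegw u]
        rw [mem_filter]
        exact ⟨SimpleGraph.mem_edgeFinset.mpr huvJ, Sym2.mem_mk_left u v⟩
      have := hcon u
      rw [degIn] at this
      omega
    have hk : stopIndex δ ω = t + 1 := by
      have h1' := hk_le _ hA
      have h2' : ¬ stopIndex δ ω ≤ t := fun h => hB (hSup _ _ h hkS)
      omega
    refine ⟨?_, ⟨?_, ?_⟩, ?_⟩
    · intro e heJ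
      have heG : e ∈ G.edgeFinset := hJedge e heJ
      rw [Finset.mem_coe, finalEdges, hk, mem_prefixEdges']
      refine ⟨heG, ?_⟩
      by_cases hxe : e = s(u, v)
      · subst hxe; omega
      · have := h1 e heG heJ hxe
        rw [Fin.lt_def] at this
        omega
    · rw [hk, mem_prefixEdges']
      exact ⟨huvG, by omega⟩
    · rw [hk, mem_prefixEdges']
      rintro ⟨_, h⟩
      simp only [Nat.add_sub_cancel] at h
      omega
    · have hfilter : (finalEdges δ ω).filter (fun x => u ∈ x) =
          J.edgeFinset.filter (fun x => u ∈ x) := by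
        ext x
        rw [mem_filter, mem_filter, finalEdges, hk, mem_prefixEdges']
        constructor
        · rintro ⟨⟨hxG, hxlt⟩, hux⟩
          refine ⟨?_, hux⟩
          rw [SimpleGraph.mem_edgeFinset]
          by_contra hxJ
          have := h2 x hxG hux hxJ
          rw [Fin.lt_def] at this
          omega
        · rintro ⟨hxJ, hux⟩
          have hxJ' : x ∈ J.edgeSet := SimpleGraph.mem_edgeFinset.mp hxJ
          have hxG : x ∈ G.edgeFinset := hJedge x hxJ'
          refine ⟨⟨hxG, ?_⟩, hux⟩
          by_cases hxe : x = s(u, v)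
          · subst hxe; omega
          · have := h1 x hxG hxJ' hxe
            rw [Fin.lt_def] at this
            omega
      rw [degIn, hfilter, hJdegw u]
end
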